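/- Let B₁ be a real p×r matrix, B₂ a real p×s matrix, R₁ an r×r matrix, T₁ an r×s matrix, and let U be a (p+r)×(p+r) real matrix with Uᵀ·U = U·Uᵀ = I, written in blocks U = [U₁₁ U₁₂; U₂₁ U₂₂] with U₁₁ of size p×r, U₁₂ of size p×p, U₂₁ of size r×r, U₂₂ of size r×p. Suppose [B₁; R₁] = U·[R₂; 0] for some r×r matrix R₂ (with a p×r zero block). Define S₂ := U₁₁ᵀ·B₂ + U₂₁ᵀ·T₁ and S₃ := U₁₂ᵀ·B₂ + U₂₂ᵀ·T₁. Then [B₁ B₂; R₁ T₁] = U·[R₂ S₂; 0 S₃]. Moreover, if additionally S₃ = V·M·Πᵀ for matrices V (p×p), M (p×s), and Π (s×s) with Π·Πᵀ = I, then [B₁ B₂; R₁ T₁] = U·[I 0; 0 V]·[R₂ S₂·Π; 0 M]·[I 0; 0 Πᵀ]. -/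

import Mathlib

open Matrix

/-- Multi-stage QR factorization identity: if `U` is orthogonal with blocks
`U = [U₁₁ U₁₂; U₂₁ U₂₂]` and `[B₁; R₁] = U·[R₂; 0]`, then with
`S₂ = U₁₁ᵀ·B₂ + U₂₁ᵀ·T₁` and `S₃ = U₁₂ᵀ·B₂ + U₂₂ᵀ·T₁` one has
`[B₁ B₂; R₁ T₁] = U·[R₂ S₂; 0 S₃]`; moreover, if `S₃ = V·M·Πᵀ` with `Π·Πᵀ = I`,
then `[B₁ B₂; R₁ T₁] = U·[I 0; 0 V]·[R₂ S₂·Π; 0 M]·[I 0; 0 Πᵀ]`. -/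
theorem multistage_qr_identity {p r s : ℕ}
    (B₁ : Matrix (Fin p) (Fin r) ℝ) (B₂ : Matrix (Fin p) (Fin s) ℝ)
    (R₁ : Matrix (Fin r) (Fin r) ℝ) (T₁ : Matrix (Fin r) (Fin s) ℝ)
    (U : Matrix (Fin p ⊕ Fin r) (Fin r ⊕ Fin p) ℝ)
    (U₁₁ : Matrix (Fin p) (Fin r) ℝ) (U₁₂ : Matrix (Fin p) (Fin p) ℝ)
    (U₂₁ : Matrix (Fin r) (Fin r) ℝ) (U₂₂ : Matrix (Fin r) (Fin p) ℝ)
    (hU : U = fromBlocks U₁₁ U₁₂ U₂₁ U₂₂)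
    (hUo₁ : Uᵀ * U = 1) (hUo₂ : U * Uᵀ = 1)
    (R₂ : Matrix (Fin r) (Fin r) ℝ)
    (h1 : fromRows B₁ R₁ = U * fromRows R₂ (0 : Matrix (Fin p) (Fin r) ℝ))
    (S₂ : Matrix (Fin r) (Fin s) ℝ) (S₃ : Matrix (Fin p) (Fin s) ℝ)
    (hS₂ : S₂ = U₁₁ᵀ * B₂ + U₂₁ᵀ * T₁)
    (hS₃ : S₃ = U₁₂ᵀ * B₂ + U₂₂ᵀ * T₁) :
    fromBlocks B₁ B₂ R₁ T₁ = U * fromBlocks R₂ S₂ 0 S₃ ∧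
      ∀ (V : Matrix (Fin p) (Fin p) ℝ) (M : Matrix (Fin p) (Fin s) ℝ)
        (Pm : Matrix (Fin s) (Fin s) ℝ),
        S₃ = V * M * Pmᵀ → Pm * Pmᵀ = 1 →
        fromBlocks B₁ B₂ R₁ T₁ =
          U * fromBlocks (1 : Matrix (Fin r) (Fin r) ℝ) 0 0 V * fromBlocks R₂ (S₂ * Pm) 0 M *
            fromBlocks 1 0 0 Pmᵀ := by
  -- From h1: Uᵀ * fromRows B₁ R₁ = fromRows R₂ 0
  have h1' : Uᵀ * fromRows B₁ R₁ = fromRows R₂ 0 := by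
    rw [h1, ← Matrix.mul_assoc, hUo₁, Matrix.one_mul]
  rw [hU, fromBlocks_transpose, fromBlocks_mul_fromRows] at h1'
  have e1 : U₁₁ᵀ * B₁ + U₂₁ᵀ * R₁ = R₂ := congrArg (fun X => toRows₁ X) h1'
  have e2 : U₁₂ᵀ * B₁ + U₂₂ᵀ * R₁ = 0 := congrArg (fun X => toRows₂ X) h1'
  have key : Uᵀ * fromBlocks B₁ B₂ R₁ T₁ = fromBlocks R₂ S₂ 0 S₃ := by
    rw [hU, fromBlocks_transpose, fromBlocks_multiply, e1, e2, ← hS₂, ← hS₃]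
  have main : fromBlocks B₁ B₂ R₁ T₁ = U * fromBlocks R₂ S₂ 0 S₃ := by
    rw [← key, ← Matrix.mul_assoc, hUo₂, Matrix.one_mul]
  refine ⟨main, fun V M Pm hVM hPm => ?_⟩
  have : fromBlocks (1 : Matrix (Fin r) (Fin r) ℝ) 0 0 V *
      fromBlocks R₂ (S₂ * Pm) 0 M * fromBlocks (1 : Matrix (Fin r) (Fin r) ℝ) 0 0 Pmᵀ =
      fromBlocks R₂ S₂ 0 S₃ := by
    rw [fromBlocks_multiply, fromBlocks_multiply]
    simp [Matrix.mul_assoc, hPm, hVM]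
  have h2 : fromBlocks B₁ B₂ R₁ T₁ = U * fromBlocks (1 : Matrix (Fin r) (Fin r) ℝ) 0 0 V *
      fromBlocks R₂ (S₂ * Pm) 0 M * fromBlocks (1 : Matrix (Fin r) (Fin r) ℝ) 0 0 Pmᵀ := by
    rw [Matrix.mul_assoc, Matrix.mul_assoc, ← Matrix.mul_assoc (fromBlocks (1 : Matrix (Fin r) (Fin r) ℝ) 0 0 V), this, main]
  exact h2
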